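/- If G has m ≥ 1 edges, M₂ denotes the maximum of the d-radii of the edges of G, R_g the geometric mean of the d-radii, and σ² = (1/m) Σ_{uv ∈ E(G)} (|z_{uv}| − SO(G)/m)² the variance of the d-radii, then m·(R_g + σ²/(2M₂)) ≤ SO(G). -/

import Mathlib

open Finset Real


noncomputable def dRad {V : Type*} [Fintype V] (G : SimpleGraph V) [DecidableRel G.Adj]
    (e : Sym2 V) : ℝ :=
  Sym2.lift ⟨fun u v => Real.sqrt ((G.degree u : ℝ) ^ 2 + (G.degree v : ℝ) ^ 2),
    fun u v => by simp [add_comm]⟩ e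

noncomputable def somborIndex {V : Type*} [Fintype V] [DecidableEq V] (G : SimpleGraph V)
    [DecidableRel G.Adj] : ℝ :=
  ∑ e ∈ G.edgeFinset, dRad G e


private lemma key_one_var {v x : ℝ} (hv0 : 0 ≤ v) (hv1 : v ≤ 1) (hx0 : 0 ≤ x) (hx1 : x < 1) :
    (1 - x) ^ v ≤ 1 - v * x - v * (1 - v) * x ^ 2 / 2 := by
  rcases eq_or_lt_of_le hx0 with h | h
  · simp [← h]
  set f : ℝ → ℝ := fun y => 1 - v * y - v * (1 - v) * y ^ 2 / 2 - (1 - y) ^ v with hfdef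
  have hcont : ContinuousOn f (Set.Icc 0 x) := by
    apply ContinuousOn.sub
    · fun_prop
    · intro y _
      exact ((Real.continuousAt_rpow_const (1 - y) v (Or.inr hv0)).comp
        ((continuous_const.sub continuous_id).continuousAt)).continuousWithinAt
  have hmono : MonotoneOn f (Set.Icc 0 x) := by
    apply monotoneOn_of_hasDerivWithinAt_nonneg (convex_Icc 0 x) hcont
      (f' := fun y => -v - v * (1 - v) * y + v * (1 - y) ^ (v - 1))
    · intro y hy
      rw [interior_Icc] at hy
      have hy1 : y < 1 := lt_trans hy.2 hx1
      have hbase : (0:ℝ) < 1 - y := by linarith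
      have hd1 : HasDerivAt (fun y : ℝ => (1 - y)) (-1) y := by
        simpa using (hasDerivAt_id y).const_sub 1
      have hd2 : HasDerivAt (fun y : ℝ => (1 - y) ^ v)
          (v * (1 - y) ^ (v - 1) * (-1)) y :=
        (Real.hasDerivAt_rpow_const (Or.inl (ne_of_gt hbase))).comp y hd1
      have hd3 : HasDerivAt f (-v - v * (1 - v) * y + v * (1 - y) ^ (v - 1)) y := by
        have hpoly : HasDerivAt (fun y : ℝ => 1 - v * y - v * (1 - v) * y ^ 2 / 2)
            (-v - v * (1 - v) * y) y := by
          have h := (((hasDerivAt_const y (1:ℝ)).sub ((hasDerivAt_id y).const_mul v)).sub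
              (((hasDerivAt_pow 2 y).const_mul (v * (1 - v))).div_const 2))
          refine h.congr_deriv ?_
          push_cast
          ring
        have := hpoly.sub hd2
        refine this.congr_deriv ?_
        ring
      exact hd3.hasDerivWithinAt
    · intro y hy
      rw [interior_Icc] at hy
      have hy0 : 0 ≤ y := le_of_lt hy.1
      have hy1 : y < 1 := lt_trans hy.2 hx1
      have hbase : (0:ℝ) < 1 - y := by linarith
      -- Bernoulli: (1-y)^(1-v) ≤ 1 - (1-v)*y
      have hbern : (1 - y) ^ (1 - v) ≤ 1 + (1 - v) * (-y) := by
        have := _root_.rpow_one_add_le_one_add_mul_self (s := -y) (p := 1 - v)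
          (by linarith) (by linarith) (by linarith)
        simpa [sub_eq_add_neg] using this
      have hbern' : (1 - y) ^ (1 - v) ≤ 1 - (1 - v) * y := by linarith
      have hpow_pos : (0:ℝ) < (1 - y) ^ (1 - v) := Real.rpow_pos_of_pos hbase _
      have hden_pos : (0:ℝ) < 1 - (1 - v) * y := lt_of_lt_of_le hpow_pos hbern'
      have hinv : (1 - y) ^ (v - 1) = ((1 - y) ^ (1 - v))⁻¹ := by
        rw [← Real.rpow_neg (le_of_lt hbase)]
        ring_nf
      have h1 : (1 - (1 - v) * y)⁻¹ ≤ (1 - y) ^ (v - 1) := by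
        rw [hinv]
        exact inv_anti₀ hpow_pos hbern'
      have h2 : 1 + (1 - v) * y ≤ (1 - (1 - v) * y)⁻¹ := by
        rw [inv_eq_one_div, le_div_iff₀ hden_pos]
        nlinarith [sq_nonneg ((1 - v) * y)]
      have h3 : 1 + (1 - v) * y ≤ (1 - y) ^ (v - 1) := le_trans h2 h1
      have := mul_le_mul_of_nonneg_left h3 hv0
      nlinarith
  have h0 : f 0 = 0 := by simp [hfdef]
  have := hmono (Set.left_mem_Icc.2 hx0) (Set.right_mem_Icc.2 hx0) hx0
  rw [h0] at this
  simp only [hfdef] at this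
  linarith

private lemma two_var {a b w : ℝ} (hb : 0 < b) (hba : b ≤ a) (hw0 : 0 ≤ w) (hw1 : w ≤ 1) :
    a ^ w * b ^ (1 - w) ≤ w * a + (1 - w) * b - w * (1 - w) * (a - b) ^ 2 / (2 * a) := by
  have ha : 0 < a := lt_of_lt_of_le hb hba
  set v : ℝ := 1 - w with hv
  set x : ℝ := 1 - b / a with hx
  have hba' : b / a ≤ 1 := (div_le_one ha).2 hba
  have hba0 : 0 < b / a := div_pos hb ha
  have key := key_one_var (v := v) (x := x) (by linarith) (by linarith)
    (by simp [hx]; linarith) (by simp [hx]; linarith)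
  have h1mx : (1 : ℝ) - x = b / a := by simp [hx]
  rw [h1mx] at key
  -- a ^ w * b ^ v = a * (b/a) ^ v
  have hrw : a ^ w * b ^ v = a * (b / a) ^ v := by
    rw [Real.div_rpow (le_of_lt hb) (le_of_lt ha)]
    rw [show w = 1 - v by rw [hv]; ring, Real.rpow_sub ha, Real.rpow_one]
    field_simp
  rw [hrw]
  have := mul_le_mul_of_nonneg_left key (le_of_lt ha)
  calc a * (b / a) ^ v ≤ a * (1 - v * x - v * (1 - v) * x ^ 2 / 2) := this
    _ = w * a + (1 - w) * b - w * (1 - w) * (a - b) ^ 2 / (2 * a) := by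
        rw [hx, hv]
        field_simp
        ring

private lemma var_shift {ι : Type*} (t : Finset ι) (a : ι → ℝ) (c A : ℝ)
    (hS : ∑ i ∈ t, a i = (t.card : ℝ) * A) :
    ∑ i ∈ t, (a i - c) ^ 2 = (∑ i ∈ t, (a i - A) ^ 2) + (t.card : ℝ) * (A - c) ^ 2 := by
  have h : ∀ i ∈ t, (a i - c) ^ 2
      = (a i - A) ^ 2 + ((2 * a i - A - c) * (A - c)) := fun i _ => by ring
  rw [Finset.sum_congr rfl h, Finset.sum_add_distrib]
  congr 1
  rw [← Finset.sum_mul]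
  have : ∑ i ∈ t, (2 * a i - A - c) = 2 * ((t.card : ℝ) * A) - t.card * (A + c) := by
    rw [← hS]
    rw [Finset.sum_sub_distrib, Finset.sum_sub_distrib, Finset.mul_sum]
    simp [Finset.sum_const, nsmul_eq_mul]
    ring
  rw [this]
  ring

lemma CF {ι : Type*} [DecidableEq ι] (M : ℝ) (a : ι → ℝ) (s : Finset ι) :
    s.Nonempty → (∀ i ∈ s, 0 < a i) → (∀ i ∈ s, a i ≤ M) →
    (∏ i ∈ s, a i) ^ ((1 : ℝ) / s.card) ≤
      (∑ i ∈ s, a i) / s.card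
        - (∑ i ∈ s, (a i - (∑ j ∈ s, a j) / s.card) ^ 2) / (2 * M * s.card) := by
  induction s using Finset.strongInduction with
  | _ s ih =>
    intro hne hpos hle
    obtain ⟨i, hi, hmax⟩ := s.exists_max_image a hne
    rcases Nat.lt_or_ge s.card 2 with hc | hc
    · -- card = 1
      have hcard : s.card = 1 := by
        have := Finset.card_pos.2 hne
        omega
      obtain ⟨j, hj⟩ := Finset.card_eq_one.1 hcard
      subst hj
      simp only [Finset.prod_singleton, Finset.sum_singleton, Finset.card_singleton,
        Nat.cast_one, div_one]
      norm_num [Real.rpow_one]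
    · -- inductive step
      set t := s.erase i with ht
      have htss : t ⊂ s := Finset.erase_ssubset hi
      have hjcard : t.card = s.card - 1 := Finset.card_erase_of_mem hi
      have htpos : 0 < t.card := by omega
      have htne : t.Nonempty := Finset.card_pos.1 htpos
      have hposT : ∀ x ∈ t, 0 < a x := fun x hx => hpos x (Finset.mem_of_mem_erase hx)
      have hleT : ∀ x ∈ t, a x ≤ M := fun x hx => hle x (Finset.mem_of_mem_erase hx)
      have IH := ih t htss htne hposT hleT
      -- notation
      set j : ℕ := t.card with hj
      set k : ℕ := s.card with hk
      have hkj : (k : ℝ) = (j : ℝ) + 1 := by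
        have : k = j + 1 := by omega
        rw [this]; push_cast; ring
      have hjR : (0:ℝ) < (j:ℝ) := by exact_mod_cast htpos
      have hkR : (0:ℝ) < (k:ℝ) := by positivity
      have hai : 0 < a i := hpos i hi
      have hM : 0 < M := lt_of_lt_of_le hai (hle i hi)
      set St : ℝ := ∑ x ∈ t, a x with hSt
      set At : ℝ := St / j with hAt
      set Vt : ℝ := ∑ x ∈ t, (a x - At) ^ 2 with hVt
      have hStA : St = (j : ℝ) * At := by rw [hAt]; field_simp
      have hVt0 : 0 ≤ Vt := Finset.sum_nonneg fun _ _ => sq_nonneg _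
      set B : ℝ := At - Vt / (2 * M * j) with hB
      have hIH' : (∏ x ∈ t, a x) ^ ((1:ℝ)/j) ≤ B := IH
      have hPt : 0 < ∏ x ∈ t, a x := Finset.prod_pos hposT
      have hGt : 0 < (∏ x ∈ t, a x) ^ ((1:ℝ)/j) := Real.rpow_pos_of_pos hPt _
      have hBpos : 0 < B := lt_of_lt_of_le hGt hIH'
      have hAt_le : At ≤ a i := by
        have : St ≤ (j : ℝ) * a i := by
          rw [hSt, hj]
          calc ∑ x ∈ t, a x ≤ ∑ x ∈ t, a i :=
                Finset.sum_le_sum fun x hx => hmax x (Finset.mem_of_mem_erase hx)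
            _ = (t.card : ℝ) * a i := by rw [Finset.sum_const, nsmul_eq_mul]
        rw [hAt, div_le_iff₀ hjR]
        linarith
      have hB_le_At : B ≤ At := by
        rw [hB]
        have : 0 ≤ Vt / (2 * M * j) := div_nonneg hVt0 (mul_pos (mul_pos two_pos hM) hjR).le
        linarith
      have hB_le_ai : B ≤ a i := le_trans hB_le_At hAt_le
      -- split the product
      have hsplit : (∏ x ∈ s, a x) = a i * ∏ x ∈ t, a x := by
        rw [ht, Finset.mul_prod_erase s a hi]
      have hSs : (∑ x ∈ s, a x) = a i + St := by
        rw [hSt, ht, Finset.add_sum_erase s a hi]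
      set As : ℝ := (∑ x ∈ s, a x) / k with hAs
      -- G_s = a i ^ (1/k) * (Pt^(1/j))^(j/k)
      have hexp : (1:ℝ)/(j:ℝ) * ((j:ℝ)/(k:ℝ)) = 1/(k:ℝ) := by
        field_simp
      have hGs : (∏ x ∈ s, a x) ^ ((1:ℝ)/k)
          = a i ^ ((1:ℝ)/k) * ((∏ x ∈ t, a x) ^ ((1:ℝ)/j)) ^ ((j:ℝ)/k) := by
        rw [hsplit, Real.mul_rpow (le_of_lt hai) (le_of_lt hPt), ← Real.rpow_mul (le_of_lt hPt),
          hexp]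
      have hmono1 : ((∏ x ∈ t, a x) ^ ((1:ℝ)/j)) ^ ((j:ℝ)/k) ≤ B ^ ((j:ℝ)/k) :=
        Real.rpow_le_rpow (le_of_lt hGt) hIH' (div_pos hjR hkR).le
      have step1 : (∏ x ∈ s, a x) ^ ((1:ℝ)/k) ≤ a i ^ ((1:ℝ)/k) * B ^ ((j:ℝ)/k) := by
        rw [hGs]
        exact mul_le_mul_of_nonneg_left hmono1 (Real.rpow_nonneg (le_of_lt hai) _)
      have hw : (j:ℝ)/(k:ℝ) = 1 - 1/(k:ℝ) := by
        rw [hkj]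
        field_simp
        ring
      have hk1 : (1:ℝ) ≤ (k:ℝ) := by linarith
      have h2v := two_var hBpos hB_le_ai (w := 1/(k:ℝ)) (one_div_pos.2 hkR).le
        (by rw [div_le_one hkR]; exact hk1)
      have hM0 : M ≠ 0 := ne_of_gt hM
      have hj0 : (j:ℝ) ≠ 0 := ne_of_gt hjR
      have hj1 : (j:ℝ) + 1 ≠ 0 := (by linarith : (0:ℝ) < j + 1).ne'
      clear_value As B Vt At St k j t
      have hVs : ∑ x ∈ s, (a x - As) ^ 2 = Vt + (j:ℝ)/(k:ℝ) * (a i - At) ^ 2 := by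
        rw [← Finset.add_sum_erase s (fun x => (a x - As) ^ 2) hi, ← ht,
          var_shift t a As At (by rw [← hSt, ← hj]; exact hStA), ← hVt, ← hj,
          hAs, hSs, hStA, hkj]
        field_simp
        ring
      have h1k : 1/(k:ℝ) ≤ 1 := by rw [div_le_one hkR]; exact hk1
      have hcoef : (0:ℝ) ≤ 1/(k:ℝ) * (1 - 1/(k:ℝ)) :=
        mul_nonneg (by positivity) (by linarith)
      have hsq : (a i - At) ^ 2 ≤ (a i - B) ^ 2 :=
        pow_le_pow_left₀ (by linarith) (by linarith) 2
      calc (∏ x ∈ s, a x) ^ ((1:ℝ)/k)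
          ≤ a i ^ ((1:ℝ)/k) * B ^ ((j:ℝ)/k) := step1
        _ = a i ^ ((1:ℝ)/k) * B ^ (1 - 1/(k:ℝ)) := by rw [hw]
        _ ≤ 1/(k:ℝ) * a i + (1 - 1/(k:ℝ)) * B
            - 1/(k:ℝ) * (1 - 1/(k:ℝ)) * (a i - B) ^ 2 / (2 * a i) := h2v
        _ ≤ 1/(k:ℝ) * a i + (1 - 1/(k:ℝ)) * B
            - 1/(k:ℝ) * (1 - 1/(k:ℝ)) * (a i - B) ^ 2 / (2 * M) := by
            have hnum : (0:ℝ) ≤ 1/(k:ℝ) * (1 - 1/(k:ℝ)) * (a i - B) ^ 2 :=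
              mul_nonneg hcoef (sq_nonneg _)
            have : 1/(k:ℝ) * (1 - 1/(k:ℝ)) * (a i - B) ^ 2 / (2 * M)
                ≤ 1/(k:ℝ) * (1 - 1/(k:ℝ)) * (a i - B) ^ 2 / (2 * a i) := by
              gcongr
              exact hle i hi
            linarith
        _ ≤ 1/(k:ℝ) * a i + (1 - 1/(k:ℝ)) * B
            - 1/(k:ℝ) * (1 - 1/(k:ℝ)) * (a i - At) ^ 2 / (2 * M) := by
            have : 1/(k:ℝ) * (1 - 1/(k:ℝ)) * (a i - At) ^ 2 / (2 * M)
                ≤ 1/(k:ℝ) * (1 - 1/(k:ℝ)) * (a i - B) ^ 2 / (2 * M) := by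
              gcongr
            linarith
        _ = As - (∑ x ∈ s, (a x - As) ^ 2) / (2 * M * (k:ℝ)) := by
            rw [hVs, hB, hAs, hSs, hStA, hkj]
            field_simp
            ring

lemma dRad_pos {V : Type*} [Fintype V] (G : SimpleGraph V) [DecidableRel G.Adj]
    (e : Sym2 V) (he : e ∈ G.edgeFinset) : 0 < dRad G e := by
  induction e using Sym2.ind with
  | _ u v =>
    rw [SimpleGraph.mem_edgeFinset, SimpleGraph.mem_edgeSet] at he
    have hd : 0 < G.degree u := by
      rw [SimpleGraph.degree_pos_iff_exists_adj]
      exact ⟨v, he⟩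
    have : (0:ℝ) < (G.degree u : ℝ) ^ 2 + (G.degree v : ℝ) ^ 2 := by
      have : (0:ℝ) < (G.degree u : ℝ) := by exact_mod_cast hd
      positivity
    unfold dRad
    rw [Sym2.lift_mk]
    exact Real.sqrt_pos.2 this

theorem stmt5 {V : Type*} [Fintype V] [DecidableEq V] (G : SimpleGraph V) [DecidableRel G.Adj]
    (m : ℕ) (hm : G.edgeFinset.card = m) (h1 : 1 ≤ m) (M₂ : ℝ)
    (hub : ∀ e ∈ G.edgeFinset, dRad G e ≤ M₂)
    (hmem : ∃ e ∈ G.edgeFinset, dRad G e = M₂) :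
    (m : ℝ) * ((∏ e ∈ G.edgeFinset, dRad G e) ^ ((1 : ℝ) / m)
        + ((1 / m) * ∑ e ∈ G.edgeFinset, (dRad G e - somborIndex G / m) ^ 2) / (2 * M₂))
      ≤ somborIndex G := by
  have hne : G.edgeFinset.Nonempty := by
    rw [← Finset.card_pos, hm]; omega
  have hpos : ∀ e ∈ G.edgeFinset, 0 < dRad G e := fun e he => dRad_pos G e he
  have hM : 0 < M₂ := by
    obtain ⟨e, he, hval⟩ := hmem
    rw [← hval]; exact hpos e he
  have key := CF M₂ (dRad G) G.edgeFinset hne hpos hub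
  rw [hm] at key
  have hm0 : (0:ℝ) < (m:ℝ) := by exact_mod_cast h1
  set P : ℝ := ∏ e ∈ G.edgeFinset, dRad G e
  have hSO : somborIndex G = ∑ e ∈ G.edgeFinset, dRad G e := rfl
  rw [← hSO] at key
  set VV : ℝ := ∑ e ∈ G.edgeFinset, (dRad G e - somborIndex G / m) ^ 2 with hVV
  have hmul := mul_le_mul_of_nonneg_left key (le_of_lt hm0)
  have h2 : (m:ℝ) * (P ^ ((1:ℝ)/m) + ((1/(m:ℝ)) * VV) / (2 * M₂))
      = (m:ℝ) * (P ^ ((1:ℝ)/m)) + VV / (2 * M₂) := by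
    field_simp
  have h3 : (m:ℝ) * (somborIndex G / m - VV / (2 * M₂ * m))
      = somborIndex G - VV / (2 * M₂) := by
    field_simp
  rw [h2]
  rw [h3] at hmul
  linarith
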